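/- arXiv:1608.06384 — 4 statements merged into one kernel-verified Lean document; each statement's English description precedes it below -/
import Mathlib

section
/- For all real α, β > −1, every natural number s, and every real x: Σ_{r=0}^{s} c̄ᵒ_r · P^{(α,β)}_r(x) = c̿ᵉ_s · P^{(α+1,β)}_s(x). -/
open Real MeasureTheory

noncomputable def jacA (α β : ℝ) (k : ℕ) : ℝ :=
  if k = 0 then (β - α) / (α + β + 2)
  else (β - α) * (α + β) / ((2*(k:ℝ) + α + β) * (2*(k:ℝ) + α + β + 2))

noncomputable def jacB (α β : ℝ) (k : ℕ) : ℝ :=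
  2 * ((k:ℝ) + α) * ((k:ℝ) + β) / ((2*(k:ℝ) + α + β) * (2*(k:ℝ) + α + β + 1))

noncomputable def jacC (α β : ℝ) (k : ℕ) : ℝ :=
  if k = 0 then 2 / (α + β + 2)
  else 2 * ((k:ℝ) + 1) * ((k:ℝ) + 1 + α + β) /
    ((2*(k:ℝ) + α + β + 1) * (2*(k:ℝ) + α + β + 2))

/-- The Jacobi polynomials `P^{(α,β)}_k` (as functions `ℝ → ℝ`), defined by the
three-term recurrence. -/
noncomputable def jacP (α β : ℝ) : ℕ → ℝ → ℝ
  | 0 => fun _ => 1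
  | 1 => fun x => (x - jacA α β 0) / jacC α β 0
  | (k+2) => fun x =>
      ((x - jacA α β (k+1)) * jacP α β (k+1) x - jacB α β (k+1) * jacP α β k x) / jacC α β (k+1)

/-- `c̄ᵒ_k` -/
noncomputable def cBarOdd (α β : ℝ) (k : ℕ) : ℝ :=
  if k = 0 then Real.Gamma (α + β + 2) / Real.Gamma (β + 1)
  else (2*(k:ℝ) + α + β + 1) * Real.Gamma ((k:ℝ) + α + β + 1) / Real.Gamma ((k:ℝ) + β + 1)

/-- `c̿ᵒ_k` -/
noncomputable def cBarBarOdd (α : ℝ) (k : ℕ) : ℝ :=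
  Real.Gamma ((k:ℝ) + 1) * Real.Gamma (α + 1) / Real.Gamma (α + (k:ℝ) + 1)

/-- `c̄ᵉ_k` -/
noncomputable def cBarEven (α β : ℝ) (k : ℕ) : ℝ :=
  (2*(k:ℝ) + α + β + 2) * Real.Gamma ((k:ℝ) + 1) * Real.Gamma (α + 1) /
    (2 * Real.Gamma (α + (k:ℝ) + 2))

/-- `c̿ᵉ_k` -/
noncomputable def cBarBarEven (α β : ℝ) (k : ℕ) : ℝ :=
  Real.Gamma ((k:ℝ) + α + β + 2) / Real.Gamma ((k:ℝ) + β + 1)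

/-- `φᵒ_k` -/
noncomputable def phiOdd (α β : ℝ) (k : ℕ) : ℝ := cBarOdd α β k / cBarBarOdd α k

/-- `φᵉ_k` -/
noncomputable def phiEven (α β : ℝ) (k : ℕ) : ℝ := cBarEven α β k / cBarBarEven α β k

/-- The Jacobi weight `w_{(α,β)}(x) = (1-x)^α (1+x)^β`. -/
noncomputable def jacWeight (α β : ℝ) (x : ℝ) : ℝ := (1 - x) ^ α * (1 + x) ^ β

/-- The weighted inner product `⟨f,g⟩_{(α,β)}`. -/
noncomputable def jacInner (α β : ℝ) (f g : ℝ → ℝ) : ℝ :=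
  ∫ x in (-1:ℝ)..1, f x * g x * jacWeight α β x

/-- Cleared three-term recurrence for the Jacobi polynomials. -/
lemma jac_rec (γ δ : ℝ) (h : -2 < γ + δ) (x : ℝ) (k : ℕ) :
    (2*((k:ℝ)+1)+γ+δ) * (2*((k:ℝ)+1)+γ+δ+1) * (2*((k:ℝ)+1)+γ+δ+2) * x * jacP γ δ (k+1) x
      = (δ-γ)*(γ+δ)*(2*((k:ℝ)+1)+γ+δ+1) * jacP γ δ (k+1) x
        + 2*(((k:ℝ)+1)+γ)*(((k:ℝ)+1)+δ)*(2*((k:ℝ)+1)+γ+δ+2) * jacP γ δ k x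
        + 2*(((k:ℝ)+1)+1)*(((k:ℝ)+1)+1+γ+δ)*(2*((k:ℝ)+1)+γ+δ) * jacP γ δ (k+2) x := by
  have hk : (0:ℝ) ≤ (k:ℝ) := Nat.cast_nonneg k
  have hd1 : 2*((k:ℝ)+1)+γ+δ ≠ 0 := by nlinarith
  have hd2 : 2*((k:ℝ)+1)+γ+δ+1 ≠ 0 := by nlinarith
  have hd3 : 2*((k:ℝ)+1)+γ+δ+2 ≠ 0 := by nlinarith
  have hd4 : ((k:ℝ)+1)+1+γ+δ ≠ 0 := by nlinarith
  have hd5 : ((k:ℝ)+1)+1 ≠ 0 := by nlinarith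
  simp only [jacP, jacA, jacB, jacC, if_neg (Nat.succ_ne_zero k)]
  push_cast
  field_simp
  ring

/-- The two contiguous relations, proved jointly by induction. -/
lemma jac_key (α β : ℝ) (hα : -1 < α) (hβ : -1 < β) (x : ℝ) : ∀ n : ℕ,
    ((2*(n:ℝ)+α+β+2)*(1-x) * jacP (α+1) β n x
        = 2*((n:ℝ)+α+1) * jacP α β n x - 2*((n:ℝ)+1) * jacP α β (n+1) x)
    ∧ ((2*(n:ℝ)+α+β+3) * jacP α β (n+1) x
        = ((n:ℝ)+α+β+2) * jacP (α+1) β (n+1) x - ((n:ℝ)+β+1) * jacP (α+1) β n x) := by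
  have hs : -2 < α + β := by linarith
  have hs2 : α + β + 2 ≠ 0 := by linarith
  have hs3 : α + β + 3 ≠ 0 := by linarith
  intro n
  induction n with
  | zero =>
      constructor
      · simp only [jacP, jacA, jacC, if_pos rfl, Nat.cast_zero, ↓reduceIte]
        field_simp
        ring
      · simp only [jacP, jacA, jacC, if_pos rfl, Nat.cast_zero, ↓reduceIte]
        have : α + 1 + β + 2 ≠ 0 := by linarith
        field_simp
        ring
  | succ n ih =>
      obtain ⟨ihS, ihR⟩ := ih
      have recP := jac_rec α β hs x n
      have recQ := jac_rec (α+1) β (by linarith) x n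
      have hn : (0:ℝ) ≤ (n:ℝ) := Nat.cast_nonneg n
      have hS1 : (2*((n:ℝ)+1)+α+β+2)*(1-x) * jacP (α+1) β (n+1) x
          = 2*(((n:ℝ)+1)+α+1) * jacP α β (n+1) x
            - 2*(((n:ℝ)+1)+1) * jacP α β (n+1+1) x := by
        have hK : ((n:ℝ)+α+β+2)*(2*(n:ℝ)+α+β+2) ≠ 0 := by
          have h1 : (0:ℝ) < (n:ℝ)+α+β+2 := by linarith
          have h2 : (0:ℝ) < 2*(n:ℝ)+α+β+2 := by linarith
          positivity
        apply mul_left_cancel₀ hK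
        linear_combination (((n:ℝ)+β+1)*(2*(n:ℝ)+α+β+4)) * ihS
          - ((1-x)*(2*(n:ℝ)+α+β+2)*(2*(n:ℝ)+α+β+4)) * ihR - recP
      refine ⟨by push_cast; linear_combination hS1, ?_⟩
      have hK2 : (2*((n:ℝ)+2)*(2*(n:ℝ)+α+β+3)) ≠ 0 := by
        have h1 : (0:ℝ) < (n:ℝ)+2 := by linarith
        have h2 : (0:ℝ) < 2*(n:ℝ)+α+β+3 := by linarith
        positivity
      push_cast
      apply mul_left_cancel₀ hK2
      linear_combination (2*((n:ℝ)+α+2)*(2*(n:ℝ)+α+β+5)) * ihR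
        + ((2*(n:ℝ)+α+β+3)*(2*(n:ℝ)+α+β+5)) * hS1 + recQ

/-- For all real α, β > −1, every natural number s, and every real x:
Σ_{r=0}^{s} c̄ᵒ_r · P^{(α,β)}_r(x) = c̿ᵉ_s · P^{(α+1,β)}_s(x). -/
theorem stmt0 (α β : ℝ) (hα : -1 < α) (hβ : -1 < β) (s : ℕ) (x : ℝ) :
    ∑ r ∈ Finset.range (s+1), cBarOdd α β r * jacP α β r x
      = cBarBarEven α β s * jacP (α+1) β s x := by
  induction s with
  | zero =>
      norm_num [Finset.sum_range_one, cBarOdd, cBarBarEven,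
        show jacP α β 0 x = 1 from rfl, show jacP (α+1) β 0 x = 1 from rfl]
  | succ s ih =>
      rw [Finset.sum_range_succ, ih]
      have hR := (jac_key α β hα hβ x s).2
      have hb1 : (0:ℝ) < (s:ℝ) + β + 1 := by
        have : (0:ℝ) ≤ (s:ℝ) := Nat.cast_nonneg s; linarith
      have hab2 : (0:ℝ) < (s:ℝ) + α + β + 2 := by
        have : (0:ℝ) ≤ (s:ℝ) := Nat.cast_nonneg s; linarith
      have hG1 : (0:ℝ) < Real.Gamma ((s:ℝ)+β+1) := Real.Gamma_pos_of_pos hb1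
      have g2 : Real.Gamma ((s:ℝ)+1+β+1) = ((s:ℝ)+β+1) * Real.Gamma ((s:ℝ)+β+1) := by
        rw [show (s:ℝ)+1+β+1 = ((s:ℝ)+β+1)+1 by ring, Real.Gamma_add_one (ne_of_gt hb1)]
      have g3 : Real.Gamma ((s:ℝ)+1+α+β+2) = ((s:ℝ)+α+β+2) * Real.Gamma ((s:ℝ)+α+β+2) := by
        rw [show (s:ℝ)+1+α+β+2 = ((s:ℝ)+α+β+2)+1 by ring, Real.Gamma_add_one (ne_of_gt hab2)]
      have g1 : Real.Gamma ((s:ℝ)+1+α+β+1) = Real.Gamma ((s:ℝ)+α+β+2) := by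
        rw [show (s:ℝ)+1+α+β+1 = (s:ℝ)+α+β+2 by ring]
      have hG1' : Real.Gamma ((s:ℝ)+β+1) ≠ 0 := ne_of_gt hG1
      have hb1' : ((s:ℝ)+β+1) ≠ 0 := ne_of_gt hb1
      have hK : (((s:ℝ)+β+1) * Real.Gamma ((s:ℝ)+β+1)) ≠ 0 := mul_ne_zero hb1' hG1'
      have e3 : cBarBarEven α β s * (((s:ℝ)+β+1) * Real.Gamma ((s:ℝ)+β+1))
          = ((s:ℝ)+β+1) * Real.Gamma ((s:ℝ)+α+β+2) := by
        simp only [cBarBarEven]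
        rw [show Real.Gamma ((s:ℝ)+α+β+2) / Real.Gamma ((s:ℝ)+β+1)
              * (((s:ℝ)+β+1) * Real.Gamma ((s:ℝ)+β+1))
            = ((s:ℝ)+β+1) * (Real.Gamma ((s:ℝ)+α+β+2) / Real.Gamma ((s:ℝ)+β+1)
              * Real.Gamma ((s:ℝ)+β+1)) by ring, div_mul_cancel₀ _ hG1']
      have e2 : cBarOdd α β (s+1) * (((s:ℝ)+β+1) * Real.Gamma ((s:ℝ)+β+1))
          = (2*(s:ℝ)+α+β+3) * Real.Gamma ((s:ℝ)+α+β+2) := by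
        simp only [cBarOdd, if_neg (Nat.succ_ne_zero s)]
        push_cast
        rw [g1, g2, div_mul_cancel₀ _ hK]
        ring
      have e1 : cBarBarEven α β (s+1) * (((s:ℝ)+β+1) * Real.Gamma ((s:ℝ)+β+1))
          = ((s:ℝ)+α+β+2) * Real.Gamma ((s:ℝ)+α+β+2) := by
        simp only [cBarBarEven]
        push_cast
        rw [g3, g2, div_mul_cancel₀ _ hK]
      apply mul_right_cancel₀ hK
      linear_combination (jacP (α+1) β s x) * e3 + (jacP α β (s+1) x) * e2
        - (jacP (α+1) β (s+1) x) * e1 + Real.Gamma ((s:ℝ)+α+β+2) * hR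
end

section
/- For all real α, β > −1, every natural number r, and every real x: (x − 1) · c̄ᵉ_r · P^{(α+1,β)}_r(x) = c̿ᵒ_{r+1} · P^{(α,β)}_{r+1}(x) − c̿ᵒ_r · P^{(α,β)}_r(x). -/
open Real MeasureTheory

set_option maxHeartbeats 1000000 in
lemma jacP_rec (α β : ℝ) (hα : -1 < α) (hβ : -1 < β) (k : ℕ) (x : ℝ) :
    (2*(k:ℝ)+α+β+2) * (2*((k:ℝ)+2)*((k:ℝ)+2+α+β)) * jacP α β (k+2) x
      = (2*(k:ℝ)+α+β+2)*(2*(k:ℝ)+α+β+3)*(2*(k:ℝ)+α+β+4) * (x * jacP α β (k+1) x)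
        - (β-α)*(α+β)*(2*(k:ℝ)+α+β+3) * jacP α β (k+1) x
        - 2*((k:ℝ)+1+α)*((k:ℝ)+1+β)*(2*(k:ℝ)+α+β+4) * jacP α β k x := by
  have hk : (0:ℝ) ≤ (k:ℝ) := Nat.cast_nonneg k
  have h2 : (2*(k:ℝ)+α+β+2) ≠ 0 := by nlinarith
  have h3 : (2*(k:ℝ)+α+β+3) ≠ 0 := by nlinarith
  have h4 : (2*(k:ℝ)+α+β+4) ≠ 0 := by nlinarith
  have h5 : ((k:ℝ)+2) ≠ 0 := by nlinarith
  have h6 : ((k:ℝ)+2+α+β) ≠ 0 := by nlinarith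
  have hA : jacA α β (k+1) = (β-α)*(α+β) / ((2*(k:ℝ)+α+β+2)*(2*(k:ℝ)+α+β+4)) := by
    simp only [jacA, Nat.add_eq_zero, one_ne_zero, and_false, if_false]
    push_cast; ring_nf
  have hB : jacB α β (k+1) = 2*((k:ℝ)+1+α)*((k:ℝ)+1+β)/((2*(k:ℝ)+α+β+2)*(2*(k:ℝ)+α+β+3)) := by
    simp only [jacB]; push_cast; ring_nf
  have hC : jacC α β (k+1) = (2*((k:ℝ)+2)*((k:ℝ)+2+α+β))/((2*(k:ℝ)+α+β+3)*(2*(k:ℝ)+α+β+4)) := by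
    simp only [jacC, Nat.add_eq_zero, one_ne_zero, and_false, if_false]
    push_cast; ring_nf
  show (2*(k:ℝ)+α+β+2) * (2*((k:ℝ)+2)*((k:ℝ)+2+α+β)) *
      (((x - jacA α β (k+1)) * jacP α β (k+1) x - jacB α β (k+1) * jacP α β k x) / jacC α β (k+1)) = _
  rw [hA, hB, hC]
  field_simp


set_option maxHeartbeats 1000000 in
lemma key_ind (α β : ℝ) (hα : -1 < α) (hβ : -1 < β) (x : ℝ) : ∀ r : ℕ,
    ((x - 1) * (2*(r:ℝ)+α+β+2) * jacP (α+1) β r x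
        = 2*(((r:ℝ)+1) * jacP α β (r+1) x - (α+(r:ℝ)+1) * jacP α β r x)) ∧
    ((2*(r:ℝ)+α+β+3) * jacP α β (r+1) x
        = ((r:ℝ)+α+β+2) * jacP (α+1) β (r+1) x - ((r:ℝ)+1+β) * jacP (α+1) β r x) := by
  have hs2 : α+β+2 ≠ 0 := by nlinarith
  have hs3 : α+β+3 ≠ 0 := by nlinarith
  intro r
  induction r with
  | zero =>
    have hA0 : jacA α β 0 = (β-α)/(α+β+2) := rfl
    have hC0 : jacC α β 0 = 2/(α+β+2) := rfl
    have hA0' : jacA (α+1) β 0 = (β-α-1)/(α+β+3) := by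
      rw [show jacA (α+1) β 0 = (β-(α+1))/((α+1)+β+2) from rfl,
        show (α+1)+β+2 = α+β+3 by ring]
      ring_nf
    have hC0' : jacC (α+1) β 0 = 2/(α+β+3) := by
      rw [show jacC (α+1) β 0 = 2/((α+1)+β+2) from rfl, show (α+1)+β+2 = α+β+3 by ring]
    constructor
    · simp only [Nat.cast_zero]
      show (x-1) * (2*(0:ℝ)+α+β+2) * 1 = 2*(((0:ℝ)+1) * ((x - jacA α β 0)/jacC α β 0) - (α+(0:ℝ)+1) * 1)
      rw [hA0, hC0]
      field_simp
      ring
    · simp only [Nat.cast_zero]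
      show (2*(0:ℝ)+α+β+3) * ((x - jacA α β 0)/jacC α β 0)
          = ((0:ℝ)+α+β+2) * ((x - jacA (α+1) β 0)/jacC (α+1) β 0) - ((0:ℝ)+1+β) * 1
      rw [hA0, hC0, hA0', hC0']
      field_simp
      ring
  | succ r ih =>
    obtain ⟨IH1, IH2⟩ := ih
    have hk : (0:ℝ) ≤ (r:ℝ) := Nat.cast_nonneg r
    have hP := jacP_rec α β hα hβ r x
    have hQ := jacP_rec (α+1) β (by linarith) hβ r x
    have hd1 : ((r:ℝ)+α+β+2) * (2*(r:ℝ)+α+β+2) ≠ 0 := by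
      apply mul_ne_zero <;> nlinarith
    have G1 : (x - 1) * (2*((r:ℝ)+1)+α+β+2) * jacP (α+1) β (r+1) x
        = 2*(((r:ℝ)+1+1) * jacP α β (r+2) x - (α+(r:ℝ)+1+1) * jacP α β (r+1) x) := by
      have G1' : ((r:ℝ)+α+β+2) * (2*(r:ℝ)+α+β+2) *
            ((x - 1) * (2*((r:ℝ)+1)+α+β+2) * jacP (α+1) β (r+1) x)
          = ((r:ℝ)+α+β+2) * (2*(r:ℝ)+α+β+2) *
            (2*(((r:ℝ)+1+1) * jacP α β (r+2) x - (α+(r:ℝ)+1+1) * jacP α β (r+1) x)) := by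
        linear_combination (-(2*(r:ℝ)+α+β+2)*(x-1)*(2*(r:ℝ)+α+β+4)) * IH2
          + (((r:ℝ)+1+β)*(2*(r:ℝ)+α+β+4)) * IH1 + (-1) * hP
      exact mul_left_cancel₀ hd1 G1'
    refine ⟨by push_cast; push_cast at G1; linarith [G1], ?_⟩
    have hd2 : 2*((r:ℝ)+2)*(2*(r:ℝ)+α+β+3) ≠ 0 := by
      apply mul_ne_zero; apply mul_ne_zero <;> nlinarith
      nlinarith
    have G2' : 2*((r:ℝ)+2)*(2*(r:ℝ)+α+β+3) *
          ((2*((r:ℝ)+1)+α+β+3) * jacP α β (r+2) x)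
        = 2*((r:ℝ)+2)*(2*(r:ℝ)+α+β+3) *
          (((r:ℝ)+1+α+β+2) * jacP (α+1) β (r+2) x - ((r:ℝ)+1+1+β) * jacP (α+1) β (r+1) x) := by
      linear_combination (-1) * hQ + (-(2*(r:ℝ)+α+β+3)*(2*(r:ℝ)+α+β+5)) * G1
        + (2*(2*(r:ℝ)+α+β+5)*((r:ℝ)+α+2)) * IH2
    have := mul_left_cancel₀ hd2 G2'
    push_cast
    push_cast at this
    linarith [this]

/-- For all real α, β > −1, every natural number r, and every real x:
(x − 1) · c̄ᵉ_r · P^{(α+1,β)}_r(x) = c̿ᵒ_{r+1}·P^{(α,β)}_{r+1}(x) − c̿ᵒ_r·P^{(α,β)}_r(x). -/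
theorem stmt2 (α β : ℝ) (hα : -1 < α) (hβ : -1 < β) (r : ℕ) (x : ℝ) :
    (x - 1) * (cBarEven α β r * jacP (α+1) β r x)
      = cBarBarOdd α (r+1) * jacP α β (r+1) x - cBarBarOdd α r * jacP α β r x := by
  have key := (key_ind α β hα hβ x r).1
  have hk : (0:ℝ) ≤ (r:ℝ) := Nat.cast_nonneg r
  have hr1 : α + (r:ℝ) + 1 ≠ 0 := by nlinarith
  have hs : 2*(r:ℝ)+α+β+2 ≠ 0 := by nlinarith
  have hGa : Real.Gamma (α + (r:ℝ) + 1) ≠ 0 := by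
    have := Real.Gamma_pos_of_pos (show (0:ℝ) < α + (r:ℝ) + 1 by nlinarith)
    linarith
  have hGr : Real.Gamma ((r:ℝ) + 1) ≠ 0 := by
    have := Real.Gamma_pos_of_pos (show (0:ℝ) < (r:ℝ) + 1 by nlinarith)
    linarith
  have hGam2 : Real.Gamma (α + (r:ℝ) + 2) = (α + (r:ℝ) + 1) * Real.Gamma (α + (r:ℝ) + 1) := by
    rw [show α + (r:ℝ) + 2 = (α + (r:ℝ) + 1) + 1 by ring, Real.Gamma_add_one hr1]
  have hGamr2 : Real.Gamma ((r:ℝ) + 1 + 1) = ((r:ℝ) + 1) * Real.Gamma ((r:ℝ) + 1) := by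
    rw [Real.Gamma_add_one (by nlinarith)]
  rw [cBarEven, cBarBarOdd, cBarBarOdd]
  push_cast
  rw [show α + ((r:ℝ) + 1) + 1 = α + (r:ℝ) + 2 by ring, hGam2, hGamr2]
  field_simp
  linear_combination (Real.Gamma (α+1)) * key
end

section
/- Let n ≥ 1, and for each natural number k let f_k, g_k : ℂ → ℂ. Let w_1, …, w_n and z_1, …, z_n be complex numbers such that for all 1 ≤ i, j ≤ n the series Σ_{k=0}^{∞} |f_k(w_i)|·|g_k(z_j)| converges. Then the family, indexed by strictly decreasing tuples k_1 > k_2 > … > k_n ≥ 0 of natural numbers, of complex numbers det[ f_{k_j}(w_i) ]_{i,j=1}^{n} · det[ g_{k_i}(z_j) ]_{i,j=1}^{n} is summable, and its sum equals det[ Σ_{k=0}^{∞} f_k(w_i)·g_k(z_j) ]_{i,j=1}^{n}. -/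
open Real MeasureTheory

private lemma pi_summable_nonneg : ∀ (n : ℕ) (b : Fin n → ℕ → ℝ),
    (∀ i, Summable (b i)) → (∀ i k, 0 ≤ b i k) →
    Summable (fun k : Fin n → ℕ => ∏ i, b i (k i)) := by
  intro n
  induction n with
  | zero => intro b _ _; exact Summable.of_finite
  | succ n IH =>
    intro b hb hb0
    have h2 : Summable (fun k : Fin n → ℕ => ∏ i, b i.succ (k i)) :=
      IH (fun i => b i.succ) (fun i => hb _) (fun i k => hb0 _ _)
    have h := (hb 0).mul_of_nonneg h2 (fun k => hb0 0 k)
      (fun k => Finset.prod_nonneg fun i _ => hb0 _ _)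
    refine (Equiv.summable_iff (Fin.consEquiv fun _ : Fin (n+1) => ℕ)).mp ?_
    have he : ((fun k : Fin (n+1) → ℕ => ∏ i, b i (k i)) ∘
        (Fin.consEquiv fun _ : Fin (n+1) => ℕ))
        = fun p : ℕ × (Fin n → ℕ) => b 0 p.1 * ∏ i, b i.succ (p.2 i) := by
      funext p
      simp [Fin.consEquiv, Fin.prod_univ_succ]
    rw [he]
    exact h

private lemma pi_hasSum : ∀ (n : ℕ) (a : Fin n → ℕ → ℂ),
    (∀ i, Summable (fun k => ‖a i k‖)) →
    HasSum (fun k : Fin n → ℕ => ∏ i, a i (k i)) (∏ i, ∑' k, a i k) := by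
  intro n
  induction n with
  | zero =>
    intro a _
    simp only [Finset.univ_eq_empty, Finset.prod_empty]
    exact hasSum_single (f := fun _ : Fin 0 → ℕ => (1:ℂ)) default
      (fun b hb => absurd (Subsingleton.elim b default) hb)
  | succ n IH =>
    intro a ha
    have h0 : HasSum (a 0) (∑' k, a 0 k) := (Summable.of_norm (ha 0)).hasSum
    have IH' := IH (fun i => a i.succ) (fun i => ha _)
    have hsum : Summable
        (fun p : ℕ × (Fin n → ℕ) => a 0 p.1 * ∏ i, a i.succ (p.2 i)) := by
      apply Summable.of_norm
      have := (ha 0).mul_of_nonneg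
        (pi_summable_nonneg n (fun i k => ‖a i.succ k‖) (fun i => ha _)
          (fun i k => norm_nonneg _))
        (fun k => norm_nonneg _)
        (fun k => Finset.prod_nonneg fun i _ => norm_nonneg _)
      convert this using 2 with p
      rw [norm_mul]
      congr 1
      exact norm_prod _ _
    have key := h0.mul IH' hsum
    refine (Equiv.hasSum_iff (Fin.consEquiv fun _ : Fin (n+1) => ℕ)).mp ?_
    have he : ((fun k : Fin (n+1) → ℕ => ∏ i, a i (k i)) ∘
        (Fin.consEquiv fun _ : Fin (n+1) => ℕ))
        = fun p : ℕ × (Fin n → ℕ) => a 0 p.1 * ∏ i, a i.succ (p.2 i) := by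
      funext p
      simp [Fin.consEquiv, Fin.prod_univ_succ]
    rw [he, Fin.prod_univ_succ]
    exact key

set_option maxHeartbeats 1000000 in
/-- a variant of the Cauchy–Binet formula: summing products of
determinants over strictly decreasing tuples k₁ > … > kₙ ≥ 0. -/
theorem stmt13 (n : ℕ) (hn : 1 ≤ n) (f g : ℕ → ℂ → ℂ) (w z : Fin n → ℂ)
    (habs : ∀ i j : Fin n,
      Summable (fun k : ℕ => ‖f k (w i)‖ * ‖g k (z j)‖)) :
    HasSum (fun kt : {k : Fin n → ℕ // StrictAnti k} =>
      Matrix.det (Matrix.of fun i j : Fin n => f (kt.1 j) (w i)) *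
      Matrix.det (Matrix.of fun i j : Fin n => g (kt.1 i) (z j)))
      (Matrix.det (Matrix.of fun i j : Fin n => ∑' k : ℕ, f k (w i) * g k (z j))) := by
  classical
  have hnorm : ∀ i j : Fin n, Summable fun k : ℕ => ‖f k (w i) * g k (z j)‖ := by
    intro i j
    simpa [norm_mul] using habs i j
  set F : (Fin n → ℕ) → ℂ := fun k =>
    (∏ i, g (k i) (z i)) * Matrix.det (Matrix.of fun i j : Fin n => f (k j) (w i))
    with hFdef
  -- Step 1: HasSum F (det M)
  have hF : HasSum F
      (Matrix.det (Matrix.of fun i j : Fin n => ∑' k : ℕ, f k (w i) * g k (z j))) := by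
    have hσ : ∀ σ : Equiv.Perm (Fin n),
        HasSum (fun k : Fin n → ℕ =>
          ((Equiv.Perm.sign σ : ℤ) : ℂ) * ∏ i, (f (k i) (w (σ i)) * g (k i) (z i)))
          (((Equiv.Perm.sign σ : ℤ) : ℂ) * ∏ i, ∑' m, f m (w (σ i)) * g m (z i)) :=
      fun σ => (pi_hasSum n (fun i m => f m (w (σ i)) * g m (z i))
        (fun i => hnorm (σ i) i)).mul_left _
    have htot := hasSum_sum (s := (Finset.univ : Finset (Equiv.Perm (Fin n))))
      (f := fun σ (k : Fin n → ℕ) =>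
        ((Equiv.Perm.sign σ : ℤ) : ℂ) * ∏ i, (f (k i) (w (σ i)) * g (k i) (z i)))
      (fun σ _ => hσ σ)
    have hval : (∑ σ : Equiv.Perm (Fin n), ((Equiv.Perm.sign σ : ℤ) : ℂ) *
        ∏ i, ∑' m, f m (w (σ i)) * g m (z i))
        = Matrix.det (Matrix.of fun i j : Fin n => ∑' k : ℕ, f k (w i) * g k (z j)) := by
      rw [Matrix.det_apply']
      rfl
    have hfun : (fun k : Fin n → ℕ => ∑ σ : Equiv.Perm (Fin n),
        ((Equiv.Perm.sign σ : ℤ) : ℂ) * ∏ i, (f (k i) (w (σ i)) * g (k i) (z i))) = F := by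
      funext k
      rw [hFdef]
      simp only [Matrix.det_apply', Matrix.of_apply]
      rw [Finset.mul_sum]
      refine Finset.sum_congr rfl fun σ _ => ?_
      rw [Finset.prod_mul_distrib]
      ring
    rw [hval] at htot
    rw [← hfun]
    exact htot
  -- vanishing on non-injective tuples
  have hF0 : ∀ k : Fin n → ℕ, ¬ Function.Injective k → F k = 0 := by
    intro k hk
    rw [Function.not_injective_iff] at hk
    obtain ⟨i, j, hij, hne⟩ := hk
    have hdet : Matrix.det (Matrix.of fun i j : Fin n => f (k j) (w i)) = 0 :=
      Matrix.det_zero_of_column_eq hne (fun r => by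
        simp only [Matrix.of_apply]; rw [hij])
    rw [hFdef]
    simp [hdet]
  -- the bijection
  let Φ : {kt : Fin n → ℕ // StrictAnti kt} × Equiv.Perm (Fin n) →
      {k : Fin n → ℕ // Function.Injective k} :=
    fun p => ⟨p.1.1 ∘ p.2, p.1.2.injective.comp p.2.injective⟩
  have hΦinj : Function.Injective Φ := by
    rintro ⟨⟨kt, hkt⟩, σ⟩ ⟨⟨kt', hkt'⟩, σ'⟩ h
    have h1 : kt ∘ σ = kt' ∘ σ' := congrArg Subtype.val h
    have hr : Set.range kt = Set.range kt' := by
      rw [← σ.surjective.range_comp kt, ← σ'.surjective.range_comp kt', h1]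
    have hk : kt = kt' := (StrictAnti.range_inj hkt hkt').mp hr
    subst hk
    have hσ : σ = σ' := Equiv.ext fun i => hkt.injective (congrFun h1 i)
    simp [hσ]
  have hΦsurj : Function.Surjective Φ := by
    rintro ⟨k, hk⟩
    set σ0 := Tuple.sort k with hσ0
    have hsm : StrictMono (k ∘ σ0) :=
      (Tuple.monotone_sort k).strictMono_of_injective (hk.comp σ0.injective)
    have hanti : StrictAnti (fun i => k (σ0 (Fin.rev i))) := by
      intro i j hij
      exact hsm (Fin.rev_lt_rev.mpr hij)
    refine ⟨⟨⟨fun i => k (σ0 (Fin.rev i)), hanti⟩, σ0.symm.trans Fin.revPerm⟩, ?_⟩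
    apply Subtype.ext
    funext i
    show k (σ0 (Fin.rev (Fin.rev (σ0.symm i)))) = k i
    rw [Fin.rev_rev, Equiv.apply_symm_apply]
  let e := Equiv.ofBijective Φ ⟨hΦinj, hΦsurj⟩
  have hrange : ∀ x ∉ Set.range (Subtype.val :
      {k : Fin n → ℕ // Function.Injective k} → (Fin n → ℕ)), F x = 0 := by
    intro x hx
    refine hF0 x ?_
    intro hxinj
    exact hx ⟨⟨x, hxinj⟩, rfl⟩
  have hFi : HasSum (F ∘ (Subtype.val :
      {k : Fin n → ℕ // Function.Injective k} → (Fin n → ℕ)))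
      (Matrix.det (Matrix.of fun i j : Fin n => ∑' k : ℕ, f k (w i) * g k (z j))) :=
    (Function.Injective.hasSum_iff (f := F) Subtype.val_injective hrange).mpr hF
  have he : HasSum (fun p : {kt : Fin n → ℕ // StrictAnti kt} × Equiv.Perm (Fin n) =>
      F (p.1.1 ∘ p.2))
      (Matrix.det (Matrix.of fun i j : Fin n => ∑' k : ℕ, f k (w i) * g k (z j))) :=
    (Equiv.hasSum_iff (f := F ∘ (Subtype.val :
      {k : Fin n → ℕ // Function.Injective k} → (Fin n → ℕ))) e).mpr hFi
  refine HasSum.prod_fiberwise he ?_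
  intro kt
  have h1 := hasSum_fintype (fun σ : Equiv.Perm (Fin n) => F (kt.1 ∘ σ))
  have hsum : (∑ σ : Equiv.Perm (Fin n), F (kt.1 ∘ σ))
      = Matrix.det (Matrix.of fun i j : Fin n => f (kt.1 j) (w i)) *
        Matrix.det (Matrix.of fun i j : Fin n => g (kt.1 i) (z j)) := by
    have hC : ∀ σ : Equiv.Perm (Fin n),
        Matrix.det (Matrix.of fun i j : Fin n => f (kt.1 (σ j)) (w i))
          = ((Equiv.Perm.sign σ : ℤ) : ℂ) *
            Matrix.det (Matrix.of fun i j : Fin n => f (kt.1 j) (w i)) := fun σ =>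
      Matrix.det_permute' σ (Matrix.of fun i j : Fin n => f (kt.1 j) (w i))
    calc (∑ σ : Equiv.Perm (Fin n), F (kt.1 ∘ σ))
        = ∑ σ : Equiv.Perm (Fin n), (((Equiv.Perm.sign σ : ℤ) : ℂ) *
            ∏ i, g (kt.1 (σ i)) (z i)) *
            Matrix.det (Matrix.of fun i j : Fin n => f (kt.1 j) (w i)) := by
          refine Finset.sum_congr rfl fun σ _ => ?_
          rw [hFdef]
          simp only [Function.comp]
          rw [hC σ]
          ring
      _ = _ := by
          rw [← Finset.sum_mul, Matrix.det_apply' (Matrix.of fun i j : Fin n => g (kt.1 i) (z j))]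
          simp only [Matrix.of_apply]
          ring
  rwa [hsum] at h1
end

section
/- Let p ≥ 1. (i) (Strict case.) Let λ be a partition with at most p parts and μ a partition with at most p+1 parts; set λ̃_i := λ_i + p − i for 1 ≤ i ≤ p, λ̃_{p+1} := −1, and μ̃_j := μ_j + p + 1 − j for 1 ≤ j ≤ p+1. Then det[ 1_{λ̃_i < μ̃_j} ]_{i,j=1}^{p+1} equals 1 if μ_1 ≥ λ_1 ≥ μ_2 ≥ λ_2 ≥ … ≥ μ_p ≥ λ_p ≥ μ_{p+1}, and equals 0 otherwise. (ii) (Weak case.) Let λ and μ both be partitions with at most p parts; set λ̃_i := λ_i + p − i and μ̃_j := μ_j + p − j. Then det[ 1_{λ̃_i ≤ μ̃_j} ]_{i,j=1}^{p} equals 1 if μ_1 ≥ λ_1 ≥ μ_2 ≥ λ_2 ≥ … ≥ μ_p ≥ λ_p, and equals 0 otherwise. -/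
open Real MeasureTheory

open scoped Classical

lemma keyDet {n : ℕ} (a b : Fin n → ℤ) (ha : StrictAnti a) (hb : StrictAnti b) :
    Matrix.det (Matrix.of fun i j : Fin n => if a i < b j then (1:ℝ) else 0)
      = if (∀ i : Fin n, a i < b i ∧ ∀ h : (i:ℕ)+1 < n, b ⟨(i:ℕ)+1, h⟩ ≤ a i) then 1
        else 0 := by
  set t : Fin n → ℕ := fun i => (Finset.univ.filter fun j => a i < b j).card with ht
  have hrow : ∀ i j : Fin n, a i < b j ↔ (j:ℕ) < t i := by
    intro i j
    constructor
    · intro h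
      have hsub : Finset.Iic j ⊆ Finset.univ.filter fun j' => a i < b j' := by
        intro j' hj'
        simp only [Finset.mem_Iic] at hj'
        simp only [Finset.mem_filter, Finset.mem_univ, true_and]
        exact lt_of_lt_of_le h (hb.antitone hj')
      have hcard : (j:ℕ) + 1 ≤ t i := by
        simpa [ht, Fin.card_Iic] using Finset.card_le_card hsub
      omega
    · intro h
      by_contra hcon
      push_neg at hcon
      have hsub : (Finset.univ.filter fun j' => a i < b j') ⊆ Finset.Iio j := by
        intro j' hj'
        simp only [Finset.mem_filter, Finset.mem_univ, true_and] at hj'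
        simp only [Finset.mem_Iio]
        by_contra hge
        push_neg at hge
        exact absurd (lt_of_lt_of_le hj' (hb.antitone hge)) (not_lt.2 hcon)
      have hcard : t i ≤ (j:ℕ) := by
        simpa [ht, Fin.card_Iio] using Finset.card_le_card hsub
      omega
  have hle : ∀ i, t i ≤ n := by
    intro i
    calc t i ≤ Finset.univ.card := Finset.card_filter_le _ _
    _ = n := by simp
  have hmono : Monotone t := by
    intro i i' hii'
    apply Finset.card_le_card
    intro j hj
    simp only [Finset.mem_filter, Finset.mem_univ, true_and] at hj ⊢
    exact lt_of_le_of_lt (ha.antitone hii') hj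
  have hiff : (∀ i : Fin n, a i < b i ∧ ∀ h : (i:ℕ)+1 < n, b ⟨(i:ℕ)+1, h⟩ ≤ a i)
      ↔ ∀ i : Fin n, t i = (i:ℕ)+1 := by
    constructor
    · intro h i
      obtain ⟨h1, h2⟩ := h i
      have low : (i:ℕ) < t i := (hrow i i).1 h1
      by_cases hn : (i:ℕ)+1 < n
      · have hup : ¬ ((⟨(i:ℕ)+1, hn⟩ : Fin n) : ℕ) < t i :=
          fun hc => absurd ((hrow i _).2 hc) (not_lt.2 (h2 hn))
        simp only [] at hup
        omega
      · have hA := hle i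
        have hB := i.isLt
        omega
    · intro h i
      refine ⟨(hrow i i).2 (by rw [h i]; omega), fun hn => ?_⟩
      have hB : ¬ a i < b ⟨(i:ℕ)+1, hn⟩ := by
        rw [hrow i ⟨(i:ℕ)+1, hn⟩, h i]
        simp
      exact not_lt.1 hB
  by_cases hc : ∀ i : Fin n, t i = (i:ℕ)+1
  · rw [if_pos (hiff.2 hc)]
    have hdiag : ∀ i : Fin n, (Matrix.of fun i j : Fin n =>
        if a i < b j then (1:ℝ) else 0) i i = 1 := by
      intro i
      simp only [Matrix.of_apply, if_pos ((hrow i i).2 (by rw [hc i]; omega))]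
    rw [Matrix.det_of_lowerTriangular]
    · simp [hdiag]
    · intro i j hij
      have hij' : i < j := hij
      simp only [Matrix.of_apply, ite_eq_right_iff]
      intro hab
      exfalso
      have hjt := (hrow i j).1 hab
      rw [hc i] at hjt
      exact absurd (Fin.lt_def.1 hij') (by omega)
  · rw [if_neg (fun h => hc (hiff.1 h))]
    push_neg at hc
    obtain ⟨i₀, hi₀⟩ := hc
    have hnpos : 0 < n := i₀.pos
    by_cases ht0 : t ⟨0, hnpos⟩ = 0
    · apply Matrix.det_eq_zero_of_row_eq_zero ⟨0, hnpos⟩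
      intro j
      simp only [Matrix.of_apply, ite_eq_right_iff]
      intro hab
      exfalso
      have := (hrow ⟨0, hnpos⟩ j).1 hab
      omega
    · by_cases hinj : Function.Injective t
      · exfalso
        have hsm : StrictMono t := hmono.strictMono_of_injective hinj
        have hgap : ∀ k : ℕ, ∀ i j : Fin n, (j:ℕ) = (i:ℕ) + k → t i + k ≤ t j := by
          intro k
          induction k with
          | zero =>
            intro i j hj
            have hij : i = j := Fin.ext (by omega)
            rw [hij]
            omega
          | succ k ih =>
            intro i j hj
            have hj' : (i:ℕ) + k < n := by have := j.isLt; omega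
            have h1 := ih i ⟨(i:ℕ)+k, hj'⟩ rfl
            have h2 : t ⟨(i:ℕ)+k, hj'⟩ < t j := hsm (by rw [Fin.lt_def]; simp only [Fin.val_mk]; omega)
            omega
        apply hi₀
        have hlow := hgap (i₀:ℕ) ⟨0, hnpos⟩ i₀ (by simp)
        have hup := hgap (n - 1 - (i₀:ℕ)) i₀ ⟨n-1, by omega⟩ (by simp; omega)
        have hlast := hle ⟨n-1, by omega⟩
        have hilt := i₀.isLt
        omega
      · obtain ⟨i, j, hij, hne⟩ := Function.not_injective_iff.1 hinj
        apply Matrix.det_zero_of_row_eq hne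
        funext k
        simp only [Matrix.of_apply]
        simp only [hrow, hij]


/-- indication of interlacement between two partitions in determinantal
form (strict case for consecutive sizes p, p+1 and weak case for equal sizes p). -/
theorem stmt14 (p : ℕ) (hp : 1 ≤ p) :
    (∀ (lam : Fin p → ℕ), Antitone lam → ∀ (μ : Fin (p+1) → ℕ), Antitone μ →
      Matrix.det (Matrix.of fun i j : Fin (p+1) =>
        (if (if h : (i:ℕ) < p then ((lam ⟨(i:ℕ), h⟩ : ℤ) + ((p - 1 - (i:ℕ) : ℕ) : ℤ))
              else (-1 : ℤ))
            < (μ j : ℤ) + ((p - (j:ℕ) : ℕ) : ℤ) then (1:ℝ) else 0))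
        = if (∀ i : Fin p, lam i ≤ μ i.castSucc ∧ μ i.succ ≤ lam i) then 1 else 0) ∧
    (∀ (lam μ : Fin p → ℕ), Antitone lam → Antitone μ →
      Matrix.det (Matrix.of fun i j : Fin p =>
        (if lam i + (p - 1 - (i:ℕ)) ≤ μ j + (p - 1 - (j:ℕ)) then (1:ℝ) else 0))
        = if (∀ i : Fin p, lam i ≤ μ i ∧
              ∀ h : (i:ℕ) + 1 < p, μ ⟨(i:ℕ) + 1, h⟩ ≤ lam i) then 1 else 0) := by
  constructor
  · intro lam hlam μ hμ
    set a : Fin (p+1) → ℤ := fun i =>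
      if h : (i:ℕ) < p then ((lam ⟨(i:ℕ), h⟩ : ℤ) + ((p - 1 - (i:ℕ) : ℕ) : ℤ))
      else (-1 : ℤ) with ha_def
    set b : Fin (p+1) → ℤ := fun j => (μ j : ℤ) + ((p - (j:ℕ) : ℕ) : ℤ) with hb_def
    have ha : StrictAnti a := by
      intro i i' hii'
      rw [Fin.lt_def] at hii'
      by_cases hi' : (i':ℕ) < p
      · have hi : (i:ℕ) < p := by omega
        have hl : lam ⟨(i':ℕ), hi'⟩ ≤ lam ⟨(i:ℕ), hi⟩ := hlam (by rw [Fin.le_def]; simp only [Fin.val_mk]; omega)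
        simp only [ha_def, dif_pos hi, dif_pos hi']
        omega
      · have hi : (i:ℕ) < p := by have := i'.isLt; omega
        simp only [ha_def, dif_pos hi, dif_neg hi']
        have : (0:ℤ) ≤ (lam ⟨(i:ℕ), hi⟩ : ℤ) := Int.natCast_nonneg _
        omega
    have hb : StrictAnti b := by
      intro j j' hjj'
      rw [Fin.lt_def] at hjj'
      have hl : μ j' ≤ μ j := hμ (le_of_lt hjj')
      have := j'.isLt
      simp only [hb_def]
      omega
    rw [show (Matrix.of fun i j : Fin (p+1) =>
        (if (if h : (i:ℕ) < p then ((lam ⟨(i:ℕ), h⟩ : ℤ) + ((p - 1 - (i:ℕ) : ℕ) : ℤ))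
              else (-1 : ℤ))
            < (μ j : ℤ) + ((p - (j:ℕ) : ℕ) : ℤ) then (1:ℝ) else 0))
        = Matrix.of fun i j : Fin (p+1) => if a i < b j then (1:ℝ) else 0 from rfl]
    rw [keyDet a b ha hb]
    have hiff : (∀ i : Fin (p+1), a i < b i ∧ ∀ h : (i:ℕ)+1 < p+1, b ⟨(i:ℕ)+1, h⟩ ≤ a i)
        ↔ (∀ i : Fin p, lam i ≤ μ i.castSucc ∧ μ i.succ ≤ lam i) := by
      constructor
      · intro H i
        have hi : ((i.castSucc : Fin (p+1)) : ℕ) < p := by simp [Fin.coe_castSucc]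
        obtain ⟨H1, H2⟩ := H i.castSucc
        have hea : a i.castSucc = (lam i : ℤ) + ((p - 1 - (i:ℕ) : ℕ) : ℤ) := by
          simp only [ha_def, dif_pos hi]
          congr 1
        have heb : b i.castSucc = (μ i.castSucc : ℤ) + ((p - (i:ℕ) : ℕ) : ℤ) := by
          simp only [hb_def, Fin.coe_castSucc]
        constructor
        · rw [hea, heb] at H1
          have hip : (i:ℕ) < p := i.isLt
          omega
        · have hsucc : ((i.castSucc : Fin (p+1)) : ℕ) + 1 < p + 1 := by
            rw [Fin.coe_castSucc]; exact Nat.succ_lt_succ i.isLt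
          have H2' := H2 hsucc
          have heq : (⟨((i.castSucc : Fin (p+1)) : ℕ) + 1, hsucc⟩ : Fin (p+1)) = i.succ := by
            apply Fin.ext; simp
          rw [heq, hea] at H2'
          have heb' : b i.succ = (μ i.succ : ℤ) + ((p - ((i:ℕ)+1) : ℕ) : ℤ) := by
            simp only [hb_def, Fin.val_succ]
          rw [heb'] at H2'
          have hip : (i:ℕ) < p := i.isLt
          omega
      · intro H i
        by_cases hi : (i:ℕ) < p
        · set i' : Fin p := ⟨(i:ℕ), hi⟩ with hi'_def
          obtain ⟨H1, H2⟩ := H i'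
          have hcs : i'.castSucc = i := by apply Fin.ext; simp [hi'_def]
          have hea : a i = (lam i' : ℤ) + ((p - 1 - (i:ℕ) : ℕ) : ℤ) := by
            simp only [ha_def, dif_pos hi]; rfl
          constructor
          · rw [hea]
            rw [hcs] at H1
            simp only [hb_def]
            omega
          · intro h
            have heq : (⟨(i:ℕ) + 1, h⟩ : Fin (p+1)) = i'.succ := by
              apply Fin.ext; simp [hi'_def]
            rw [heq, hea]
            simp only [hb_def, Fin.val_succ]
            have hii : (i':ℕ) = (i:ℕ) := rfl
            omega
        · have hip : (i:ℕ) = p := by have := i.isLt; omega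
          have hea : a i = -1 := by simp only [ha_def, dif_neg hi]
          constructor
          · rw [hea]
            simp only [hb_def]
            have : (0:ℤ) ≤ (μ i : ℤ) := Int.natCast_nonneg _
            omega
          · intro h
            omega
    by_cases hC : ∀ i : Fin p, lam i ≤ μ i.castSucc ∧ μ i.succ ≤ lam i
    · rw [if_pos (hiff.2 hC), if_pos hC]
    · rw [if_neg (fun h => hC (hiff.1 h)), if_neg hC]
  · intro lam μ hlam hμ
    set a : Fin p → ℤ := fun i => (lam i : ℤ) + ((p - 1 - (i:ℕ) : ℕ) : ℤ) - 1 with ha_def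
    set b : Fin p → ℤ := fun j => (μ j : ℤ) + ((p - 1 - (j:ℕ) : ℕ) : ℤ) with hb_def
    have ha : StrictAnti a := by
      intro i i' hii'
      rw [Fin.lt_def] at hii'
      have hl : lam i' ≤ lam i := hlam (le_of_lt hii')
      have := i'.isLt
      simp only [ha_def]
      omega
    have hb : StrictAnti b := by
      intro j j' hjj'
      rw [Fin.lt_def] at hjj'
      have hl : μ j' ≤ μ j := hμ (le_of_lt hjj')
      have := j'.isLt
      simp only [hb_def]
      omega
    have hMeq : (Matrix.of fun i j : Fin p =>
        (if lam i + (p - 1 - (i:ℕ)) ≤ μ j + (p - 1 - (j:ℕ)) then (1:ℝ) else 0))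
        = Matrix.of fun i j : Fin p => if a i < b j then (1:ℝ) else 0 := by
      ext i j
      simp only [Matrix.of_apply]
      apply if_congr _ rfl rfl
      simp only [ha_def, hb_def]
      omega
    rw [hMeq, keyDet a b ha hb]
    have hiff : (∀ i : Fin p, a i < b i ∧ ∀ h : (i:ℕ)+1 < p, b ⟨(i:ℕ)+1, h⟩ ≤ a i)
        ↔ (∀ i : Fin p, lam i ≤ μ i ∧
             ∀ h : (i:ℕ) + 1 < p, μ ⟨(i:ℕ) + 1, h⟩ ≤ lam i) := by
      apply forall_congr'
      intro i
      have hip : (i:ℕ) < p := i.isLt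
      apply and_congr
      · simp only [ha_def, hb_def]
        omega
      · apply forall_congr'
        intro h
        simp only [ha_def, hb_def, Fin.val_mk]
        omega
    by_cases hC : ∀ i : Fin p, lam i ≤ μ i ∧
        ∀ h : (i:ℕ) + 1 < p, μ ⟨(i:ℕ) + 1, h⟩ ≤ lam i
    · rw [if_pos (hiff.2 hC), if_pos hC]
    · rw [if_neg (fun h => hC (hiff.1 h)), if_neg hC]
end
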